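/- Let F_q be a finite field and G ≤ PGL_2(F_q) a subgroup, and let n > 2 be an integer such that |G| does not divide n. Then there is no monic irreducible G-invariant polynomial of degree n over F_q; that is, every G-orbit of monic irreducible degree-n polynomials has size at least 2 (equivalently, ω_G(n,1) = 0). -/

import Mathlib

open Polynomial

/-- `PGL₂(F)`: the quotient of `GL₂(F)` by its center. -/
abbrev PGL2 (F : Type*) [Field F] :=
  GL (Fin 2) F ⧸ Subgroup.center (GL (Fin 2) F)

/-- The class of `A ∈ GL₂(F)` in `PGL₂(F)`. -/
abbrev PGL2.mk {F : Type*} [Field F] (A : GL (Fin 2) F) : PGL2 F :=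
  QuotientGroup.mk A

/-- The Möbius function `(ax + b)/(cx + d)` associated to `A ∈ GL₂(F)`, as a
rational function over `F`. -/
noncomputable def mobiusRatFunc {F : Type*} [Field F] (A : GL (Fin 2) F) : RatFunc F :=
  (RatFunc.C (A.val 0 0) * RatFunc.X + RatFunc.C (A.val 0 1)) /
    (RatFunc.C (A.val 1 0) * RatFunc.X + RatFunc.C (A.val 1 1))

/-- The rational transform `f^Q = Σ_{i=0}^{deg f} f_i g^i h^{deg f - i}` of a monic
polynomial `f` with the rational function `Q = g/h`. -/
noncomputable def ratTransform {F : Type*} [Field F] (g h f : F[X]) : F[X] :=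
  ∑ i ∈ Finset.range (f.natDegree + 1), C (f.coeff i) * g ^ i * h ^ (f.natDegree - i)

/-- `Q = g/h` is a quotient map for the subgroup `G ≤ PGL₂(F)`: `g, h` are coprime,
`g` is monic of degree `|G|`, `0 ≤ deg h < deg g`, and `Q` is `G`-invariant, i.e.
`Q ∘ ([A] ∘ x) = Q` for all `[A] ∈ G` (equivalently, `F(Q) = F(x)^G`). -/
def IsQuotientMap {F : Type*} [Field F] (G : Subgroup (PGL2 F)) (g h : F[X]) : Prop :=
  g.Monic ∧ IsCoprime g h ∧ h ≠ 0 ∧ h.natDegree < g.natDegree ∧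
    g.natDegree = Nat.card G ∧
    ∀ A : GL (Fin 2) F, PGL2.mk A ∈ G →
      Polynomial.aeval (mobiusRatFunc A) g / Polynomial.aeval (mobiusRatFunc A) h
        = algebraMap F[X] (RatFunc F) g / algebraMap F[X] (RatFunc F) h

/-- `d(Q)` for `Q = g/h`: the largest degree of a monic irreducible polynomial `f`
such that `f^Q` is not squarefree (`0` if no such polynomial exists). -/
noncomputable def dval {F : Type*} [Field F] (g h : F[X]) : ℕ :=
  sSup {n : ℕ | ∃ f : F[X], f.Monic ∧ Irreducible f ∧ f.natDegree = n ∧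
    ¬ Squarefree (ratTransform g h f)}

/-- The (non-normalized) Möbius substitution
`Σ_{i=0}^{deg f} f_i (ax+b)^i (cx+d)^{deg f - i}` of `f` by `A ∈ GL₂(F)`. -/
noncomputable def mobiusSubst {F : Type*} [Field F] (A : GL (Fin 2) F) (f : F[X]) : F[X] :=
  ∑ i ∈ Finset.range (f.natDegree + 1),
    C (f.coeff i) * (C (A.val 0 0) * X + C (A.val 0 1)) ^ i *
      (C (A.val 1 0) * X + C (A.val 1 1)) ^ (f.natDegree - i)

/-- `[A] ∗ f`: the unique monic scalar multiple of the Möbius substitution of `f`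
by `A`. -/
noncomputable def mobiusStar {F : Type*} [Field F] (A : GL (Fin 2) F) (f : F[X]) : F[X] :=
  C ((mobiusSubst A f).leadingCoeff)⁻¹ * mobiusSubst A f

/-- `f ∈ NR_q^G`: `f` is monic and has no root in the `G`-orbit of `∞` under the
Möbius action (the orbit point `[A] ∘ ∞` is `a/c` when `c ≠ 0`, and `∞` — which is
never a root of a monic polynomial — when `c = 0`). -/
def memNR {F : Type*} [Field F] (G : Subgroup (PGL2 F)) (f : F[X]) : Prop :=
  f.Monic ∧ ∀ A : GL (Fin 2) F, PGL2.mk A ∈ G → A.val 1 0 ≠ 0 →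
    f.eval (A.val 0 0 / A.val 1 0) ≠ 0

/-- `G ∗ r`: the `G`-orbit of the polynomial `r` under the `∗` action. -/
def polyOrbit {F : Type*} [Field F] (G : Subgroup (PGL2 F)) (r : F[X]) : Set F[X] :=
  {t : F[X] | ∃ A : GL (Fin 2) F, PGL2.mk A ∈ G ∧ t = mobiusStar A r}

/-- `ω_G(n, k)`: the number of `G`-orbits of size `k` of monic irreducible
polynomials of degree `n` in `NR_q^G`. -/
noncomputable def omegaG {F : Type*} [Field F] (G : Subgroup (PGL2 F)) (n k : ℕ) : ℕ :=
  {O : Set F[X] | ∃ r : F[X], memNR G r ∧ Irreducible r ∧ r.natDegree = n ∧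
    O = polyOrbit G r ∧ O.ncard = k}.ncard

lemma center_GL2_is_scalar {F : Type*} [Field F] {Z : GL (Fin 2) F}
    (hZ : Z ∈ Subgroup.center (GL (Fin 2) F)) :
    ∃ r : F, Z.val = Matrix.scalar (Fin 2) r := by
  have key : ∀ i j : Fin 2, i ≠ j → Commute (Matrix.single i j (1:F)) Z.val := by
    intro i j hij
    set E := Matrix.single i j (1:F) with hE
    have hEE : E * E = 0 :=
      Matrix.single_mul_single_of_ne (c := (1:F)) i j i
        (Ne.symm hij) 1
    have hu : ((1 : Matrix (Fin 2) (Fin 2) F) + E) * (1 - E) = 1 := by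
      rw [add_mul, mul_sub, mul_sub, hEE, one_mul, one_mul, mul_one]; abel
    have hu' : ((1 : Matrix (Fin 2) (Fin 2) F) - E) * (1 + E) = 1 := by
      rw [sub_mul, mul_add, mul_add, hEE, one_mul, one_mul, mul_one]; abel
    set u : GL (Fin 2) F := ⟨1 + E, 1 - E, hu, hu'⟩ with hudef
    have hc := Subgroup.mem_center_iff.mp hZ u
    have hc' : (u : Matrix (Fin 2) (Fin 2) F) * Z.val = Z.val * u.val := by
      have := congrArg Units.val hc
      simpa [Units.val_mul] using this
    have h2 : (1 + E) * Z.val = Z.val * (1 + E) := hc'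
    rw [add_mul, mul_add, one_mul, mul_one] at h2
    have h3 : E * Z.val = Z.val * E := by
      have := congrArg (· - Z.val) h2
      simpa using this
    exact h3
  obtain ⟨r, hr⟩ := Matrix.mem_range_scalar_of_commute_single
    (M := Z.val) (fun i j hij => key i j hij)
  exact ⟨r, hr.symm⟩

noncomputable def mobK {F : Type*} [Field F] {K : Type*} [Field K] [Algebra F K]
    (A : GL (Fin 2) F) (x : K) : K :=
  (algebraMap F K (A.val 0 0) * x + algebraMap F K (A.val 0 1)) /
    (algebraMap F K (A.val 1 0) * x + algebraMap F K (A.val 1 1))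

theorem key_dvd (F : Type*) [Field F] [Fintype F] (G : Subgroup (PGL2 F))
    (f : F[X]) (hm : f.Monic) (hi : Irreducible f) (hdeg : 2 < f.natDegree)
    (hinv : ∀ A : GL (Fin 2) F, PGL2.mk A ∈ G → mobiusStar A f = f) :
    Nat.card G ∣ f.natDegree := by
  haveI := Fact.mk hi
  set K := AdjoinRoot f with hK
  set α : K := AdjoinRoot.root f with hα
  haveI : FiniteDimensional F K := (AdjoinRoot.powerBasis hm.ne_zero).finite
  haveI : Finite K := Module.finite_of_finite F
  have hfinrank : Module.finrank F K = f.natDegree := by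
    rw [(AdjoinRoot.powerBasis hm.ne_zero).finrank]
    rfl
  -- no quadratic relation
  have hquad : ∀ u v w : F,
      algebraMap F K u * α ^ 2 + algebraMap F K v * α + algebraMap F K w = 0 →
      u = 0 ∧ v = 0 ∧ w = 0 := by
    intro u v w h
    have hmin : minpoly F α = f := by
      have := AdjoinRoot.minpoly_root (f := f) hm.ne_zero
      rwa [hm.leadingCoeff, inv_one, map_one, mul_one] at this
    set p : F[X] := C u * X ^ 2 + C v * X + C w with hp
    have hpz : aeval α p = 0 := by
      simp only [hp, map_add, map_mul, map_pow, aeval_C, aeval_X]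
      exact h
    have hp0 : p = 0 := by
      by_contra h0
      have hd := Polynomial.natDegree_le_of_dvd (hmin ▸ minpoly.dvd F α hpz) h0
      have hple : p.natDegree ≤ 2 := by
        rw [hp]; compute_degree
      omega
    refine ⟨?_, ?_, ?_⟩
    · have := congrArg (fun q => Polynomial.coeff q 2) hp0
      simpa [hp, coeff_add, coeff_C_mul, coeff_X_pow, coeff_C, coeff_X] using this
    · have := congrArg (fun q => Polynomial.coeff q 1) hp0
      simpa [hp, coeff_add, coeff_C_mul, coeff_X_pow, coeff_C, coeff_X] using this
    · have := congrArg (fun q => Polynomial.coeff q 0) hp0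
      simpa [hp, coeff_add, coeff_C_mul, coeff_X_pow, coeff_C, coeff_X] using this
  -- denominators never vanish
  have hden : ∀ A : GL (Fin 2) F,
      algebraMap F K (A.val 1 0) * α + algebraMap F K (A.val 1 1) ≠ 0 := by
    intro A h
    have hq := hquad 0 (A.val 1 0) (A.val 1 1) (by rw [map_zero, zero_mul, zero_add]; exact h)
    obtain ⟨-, h1, h2⟩ := hq
    have hdet : IsUnit (A.val).det := (Matrix.isUnit_iff_isUnit_det _).mp A.isUnit
    rw [Matrix.det_fin_two, h1, h2] at hdet
    simp at hdet
  -- composition law at α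
  have hcomp : ∀ A B : GL (Fin 2) F, mobK A (mobK B α) = mobK (A * B) α := by
    intro A B
    have hB := hden B
    have hAB := hden (A * B)
    have hmulent : ∀ i j, ((A * B).val) i j
        = A.val i 0 * B.val 0 j + A.val i 1 * B.val 1 j := by
      intro i j
      rw [Units.val_mul, Matrix.mul_apply, Fin.sum_univ_two]
    have h1 : algebraMap F K (A.val 0 0) * mobK B α + algebraMap F K (A.val 0 1)
        = (algebraMap F K ((A*B).val 0 0) * α + algebraMap F K ((A*B).val 0 1)) /
          (algebraMap F K (B.val 1 0) * α + algebraMap F K (B.val 1 1)) := by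
      rw [mobK, eq_div_iff hB]
      simp only [hmulent, map_add, map_mul]
      simp only [add_mul, mul_assoc, div_mul_cancel₀ _ hB]
      ring
    have h2 : algebraMap F K (A.val 1 0) * mobK B α + algebraMap F K (A.val 1 1)
        = (algebraMap F K ((A*B).val 1 0) * α + algebraMap F K ((A*B).val 1 1)) /
          (algebraMap F K (B.val 1 0) * α + algebraMap F K (B.val 1 1)) := by
      rw [mobK, eq_div_iff hB]
      simp only [hmulent, map_add, map_mul]
      simp only [add_mul, mul_assoc, div_mul_cancel₀ _ hB]
      ring
    rw [mobK, h1, h2, div_div_div_cancel_right₀ hB, mobK]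
  -- automorphisms commute with mobK
  have hcommute : ∀ (σ : K ≃ₐ[F] K) (A : GL (Fin 2) F) (x : K),
      σ (mobK A x) = mobK A (σ x) := by
    intro σ A x
    rw [mobK, mobK, map_div₀, map_add, map_add, map_mul, map_mul,
      AlgEquiv.commutes, AlgEquiv.commutes, AlgEquiv.commutes, AlgEquiv.commutes]
  -- central elements act trivially
  have hscalar : ∀ Z : GL (Fin 2) F, Z ∈ Subgroup.center (GL (Fin 2) F) → mobK Z α = α := by
    intro Z hZ
    obtain ⟨r, hr⟩ := center_GL2_is_scalar hZ
    have h00 : Z.val 0 0 = r := by rw [hr]; simp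
    have h01 : Z.val 0 1 = 0 := by rw [hr]; simp [Matrix.scalar_apply, Matrix.diagonal]
    have h10 : Z.val 1 0 = 0 := by rw [hr]; simp [Matrix.scalar_apply, Matrix.diagonal]
    have h11 : Z.val 1 1 = r := by rw [hr]; simp
    have hr0 : r ≠ 0 := by
      intro h
      subst h
      have hdet : IsUnit (Z.val).det := (Matrix.isUnit_iff_isUnit_det _).mp Z.isUnit
      rw [hr] at hdet
      simp at hdet
    rw [mobK, h00, h01, h10, h11, map_zero, zero_mul, zero_add, add_zero]
    exact mul_div_cancel_left₀ α
      (fun h => hr0 ((algebraMap F K).injective (h.trans (map_zero _).symm)))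
  -- well-definedness
  have hwd : ∀ A B : GL (Fin 2) F, PGL2.mk A = PGL2.mk B → mobK A α = mobK B α := by
    intro A B h
    have hz : A⁻¹ * B ∈ Subgroup.center (GL (Fin 2) F) := by
      rwa [QuotientGroup.eq] at h
    have hBeq : B = A * (A⁻¹ * B) := by group
    rw [show (B : GL (Fin 2) F) = A * (A⁻¹ * B) from hBeq, ← hcomp A (A⁻¹*B),
      hscalar _ hz]
  -- fixed points give scalars
  have hfix : ∀ A : GL (Fin 2) F, mobK A α = α → PGL2.mk A = 1 := by
    intro A h
    rw [mobK, div_eq_iff (hden A)] at h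
    have hq : algebraMap F K (A.val 1 0) * α ^ 2
        + algebraMap F K (A.val 1 1 - A.val 0 0) * α + algebraMap F K (-(A.val 0 1)) = 0 := by
      rw [map_sub, map_neg]
      linear_combination -h
    obtain ⟨hc, hd, hb⟩ := hquad _ _ _ hq
    rw [sub_eq_zero] at hd
    rw [neg_eq_zero] at hb
    rw [QuotientGroup.eq_one_iff, Subgroup.mem_center_iff]
    intro g
    have hval : A.val = Matrix.scalar (Fin 2) (A.val 0 0) := by
      rw [Matrix.scalar_apply]
      ext i j
      fin_cases i <;> fin_cases j <;>
        simp [Matrix.diagonal_apply, hb, hc, hd]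
    refine Units.ext ?_
    rw [Units.val_mul, Units.val_mul, hval]
    exact ((Matrix.scalar_commute (A.val 0 0) (fun r' => Commute.all _ _) g.val).eq).symm
  -- the substituted polynomial evaluated at α
  have hsum : ∀ A : GL (Fin 2) F,
      aeval (mobK A α) f
          * (algebraMap F K (A.val 1 0) * α + algebraMap F K (A.val 1 1)) ^ f.natDegree
        = aeval α (mobiusSubst A f) := by
    intro A
    have hd := hden A
    rw [mobiusSubst, map_sum, Polynomial.aeval_eq_sum_range, Finset.sum_mul]
    refine Finset.sum_congr rfl fun i hi => ?_
    rw [Finset.mem_range, Nat.lt_succ_iff] at hi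
    simp only [map_mul, map_pow, map_add, aeval_C, aeval_X]
    set m := f.natDegree - i with hmdef
    rw [mobK, div_pow, Algebra.smul_def, ← mul_div_assoc, div_mul_eq_mul_div,
      div_eq_iff (pow_ne_zero _ hd), show f.natDegree = i + m by omega, pow_add]
    ring
  -- roots are mapped to roots
  have hroot : ∀ A : GL (Fin 2) F, PGL2.mk A ∈ G → aeval (mobK A α) f = 0 := by
    intro A hA
    have h0 : aeval α f = 0 := by rw [AdjoinRoot.aeval_eq, AdjoinRoot.mk_self]
    have hf' : C ((mobiusSubst A f).leadingCoeff)⁻¹ * mobiusSubst A f = f := hinv A hA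
    have hlc : (mobiusSubst A f).leadingCoeff ≠ 0 := by
      intro h
      rw [h, inv_zero, map_zero, zero_mul] at hf'
      exact hm.ne_zero hf'.symm
    have hsub0 : aeval α (mobiusSubst A f) = 0 := by
      have := congrArg (aeval α) hf'
      rw [map_mul, aeval_C, h0] at this
      have h2 : aeval α (mobiusSubst A f) = 0 ∨ algebraMap F K ((mobiusSubst A f).leadingCoeff)⁻¹ = 0 :=
        by rcases mul_eq_zero.mp this with h | h
           · right; exact h
           · left; exact h
      rcases h2 with h | h
      · exact h
      · exact absurd ((algebraMap F K).injective (h.trans (map_zero _).symm))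
          (inv_ne_zero hlc)
    have h2 := hsum A
    rw [hsub0] at h2
    rcases mul_eq_zero.mp h2 with h | h
    · exact h
    · exact absurd h (pow_ne_zero _ (hden A))
  -- set up the Galois group embedding
  have hout : ∀ x : G, PGL2.mk (Quotient.out (x : PGL2 F)) ∈ G := by
    intro x
    have : PGL2.mk (Quotient.out (x : PGL2 F)) = (x : PGL2 F) := Quotient.out_eq _
    rw [this]
    exact x.2
  let e : G → (K ≃ₐ[F] K) := fun x =>
    AlgEquiv.ofBijective
      (AdjoinRoot.liftAlgHom f (Algebra.ofId F K) (mobK (Quotient.out (x : PGL2 F)) α) (hroot _ (hout x)))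
      (AlgHom.bijective _)
  have he : ∀ x : G, e x α = mobK (Quotient.out (x : PGL2 F)) α := fun x =>
    AdjoinRoot.liftAlgHom_root f (Algebra.ofId F K) (mobK (Quotient.out (x : PGL2 F)) α)
      (hroot _ (hout x))
  have hext : ∀ σ τ : K ≃ₐ[F] K, σ α = τ α → σ = τ := by
    intro σ τ h
    have h2 : (σ : K →ₐ[F] K) = (τ : K →ₐ[F] K) := AdjoinRoot.algHom_ext h
    exact AlgEquiv.ext fun k => DFunLike.congr_fun h2 k
  let χ : G →* (K ≃ₐ[F] K)ᵐᵒᵖ := MonoidHom.mk' (fun x => MulOpposite.op (e x)) (by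
    intro x y
    show MulOpposite.op (e (x * y)) = MulOpposite.op (e x) * MulOpposite.op (e y)
    rw [← MulOpposite.op_mul]
    congr 1
    apply hext
    rw [he, AlgEquiv.mul_apply, he, hcommute, he, hcomp]
    apply hwd
    have h1 : PGL2.mk (Quotient.out ((x * y : G) : PGL2 F)) = (x : PGL2 F) * (y : PGL2 F) :=
      Quotient.out_eq _
    have h2 : PGL2.mk (Quotient.out (x : PGL2 F) * Quotient.out (y : PGL2 F))
        = (x : PGL2 F) * (y : PGL2 F) := by
      have hx : PGL2.mk (Quotient.out (x : PGL2 F)) = (x : PGL2 F) := Quotient.out_eq _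
      have hy : PGL2.mk (Quotient.out (y : PGL2 F)) = (y : PGL2 F) := Quotient.out_eq _
      have hmm : PGL2.mk (Quotient.out (x : PGL2 F) * Quotient.out (y : PGL2 F))
          = PGL2.mk (Quotient.out (x : PGL2 F)) * PGL2.mk (Quotient.out (y : PGL2 F)) := rfl
      rw [hmm, hx, hy]
    rw [h1, h2])
  have hinj : Function.Injective χ := by
    rw [injective_iff_map_eq_one]
    intro x hx
    have h1 : e x = 1 := by
      have := congrArg MulOpposite.unop hx
      simpa [χ] using this
    have h2 : mobK (Quotient.out (x : PGL2 F)) α = α := by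
      rw [← he x, h1, AlgEquiv.one_apply]
    have h3 := hfix _ h2
    have h5 : PGL2.mk (Quotient.out (x : PGL2 F)) = (x : PGL2 F) := Quotient.out_eq _
    rw [h5] at h3
    exact Subtype.ext h3
  calc Nat.card G ∣ Nat.card ((K ≃ₐ[F] K)ᵐᵒᵖ) := Subgroup.card_dvd_of_injective χ hinj
    _ = f.natDegree := by
        rw [Nat.card_congr (MulOpposite.opEquiv (α := K ≃ₐ[F] K)).symm,
          IsGalois.card_aut_eq_finrank, hfinrank]

lemma mobiusStar_one {F : Type*} [Field F] (f : F[X]) (hm : f.Monic) :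
    mobiusStar 1 f = f := by
  have ha : (1 : GL (Fin 2) F).val 0 0 = 1 := by simp
  have hb : (1 : GL (Fin 2) F).val 0 1 = 0 := by
    rw [Units.val_one]; exact Matrix.one_apply_ne (by decide)
  have hc : (1 : GL (Fin 2) F).val 1 0 = 0 := by
    rw [Units.val_one]; exact Matrix.one_apply_ne (by decide)
  have hd : (1 : GL (Fin 2) F).val 1 1 = 1 := by simp
  have h1 : mobiusSubst (1 : GL (Fin 2) F) f = f := by
    rw [mobiusSubst]
    simp only [ha, hb, hc, hd, map_one, map_zero, add_zero, zero_mul, zero_add, one_mul,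
      one_pow, mul_one]
    conv_rhs => rw [Polynomial.as_sum_range' f (f.natDegree + 1) (lt_add_one _)]
    refine Finset.sum_congr rfl fun i _ => ?_
    rw [Polynomial.C_mul_X_pow_eq_monomial]
  rw [mobiusStar, h1, hm.leadingCoeff, inv_one, map_one, one_mul]

theorem no_invariant_irreducible_of_not_dvd (F : Type*) [Field F] [Fintype F]
    (G : Subgroup (PGL2 F)) (n : ℕ) (hn : 2 < n) (hdvd : ¬ Nat.card G ∣ n) :
    (∀ f : F[X], f.Monic → Irreducible f → f.natDegree = n →
        ∃ A : GL (Fin 2) F, PGL2.mk A ∈ G ∧ mobiusStar A f ≠ f)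
      ∧ omegaG G n 1 = 0 := by
  have part1 : ∀ f : F[X], f.Monic → Irreducible f → f.natDegree = n →
      ∃ A : GL (Fin 2) F, PGL2.mk A ∈ G ∧ mobiusStar A f ≠ f := by
    intro f hm hi hd
    by_contra hcon
    push_neg at hcon
    have hkey := key_dvd F G f hm hi (by omega) (fun A hA => hcon A hA)
    rw [hd] at hkey
    exact hdvd hkey
  refine ⟨part1, ?_⟩
  have hempty : {O : Set F[X] | ∃ r : F[X], memNR G r ∧ Irreducible r ∧ r.natDegree = n ∧
      O = polyOrbit G r ∧ O.ncard = 1} = ∅ := by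
    ext O
    simp only [Set.mem_setOf_eq, Set.mem_empty_iff_false, iff_false]
    rintro ⟨r, hmem, hirr, hdeg, rfl, hcard⟩
    obtain ⟨A, hA, hne⟩ := part1 r hmem.1 hirr hdeg
    obtain ⟨a, ha⟩ := Set.ncard_eq_one.mp hcard
    have hone : PGL2.mk (1 : GL (Fin 2) F) ∈ G := by
      have : PGL2.mk (1 : GL (Fin 2) F) = 1 := rfl
      rw [this]; exact G.one_mem
    have h1 : r ∈ polyOrbit G r := ⟨1, hone, (mobiusStar_one r hmem.1).symm⟩
    have h2 : mobiusStar A r ∈ polyOrbit G r := ⟨A, hA, rfl⟩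
    rw [ha, Set.mem_singleton_iff] at h1 h2
    exact hne (h2.trans h1.symm)
  unfold omegaG
  rw [hempty, Set.ncard_empty]
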